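/- For every l ∈ ℕ and every t ≥ D(l), one has (as an inequality in [0,∞]): p(t) ≤ (1/H(l))·(1 + ∑_{n=l}^∞ (H(l)/H(n+1))·exp(−D(l)/D(n))). (This combines the telescoping bound (4.2) for the first l terms with the tail bound (4.3) in the proof of Theorem 1.1, and gives the on-diagonal upper bound log p_t(ω,ω) ≤ log(1/H(l)) + log(1 + tail) of display (4.6).) -/

import Mathlib

open Filter Set

/-- on-diagonal upper bound combining (4.2) and (4.3) in the proof of
Theorem 1.1, as an inequality in `[0,∞]`: for every `l` and every `t ≥ D(l)`,
`p(t) ≤ (1/H(l))·(1 + ∑_{n=l}^∞ (H(l)/H(n+1))·exp(−D(l)/D(n)))`, where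
`p(t) = 1 + ∑_{n=0}^∞ (1/H(n+1) − 1/H(n))·exp(−t/D(n))` is computed in `ℝ≥0∞`. -/
theorem stmt15 (H D : ℕ → ℝ)
    (hH_anti : Antitone H) (hH0 : H 0 = 1) (hH_pos : ∀ n, 0 < H n)
    (hD_anti : StrictAnti D) (hD_pos : ∀ n, 0 < D n) :
    ∀ l : ℕ, ∀ t : ℝ, D l ≤ t →
      1 + ∑' n : ℕ, ENNReal.ofReal ((1 / H (n + 1) - 1 / H n) * Real.exp (-t / D n)) ≤
        ENNReal.ofReal (1 / H l) *
          (1 + ∑' k : ℕ,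
            ENNReal.ofReal ((H l / H (l + k + 1)) * Real.exp (-(D l / D (l + k))))) := by
  intro l t ht
  have hDl : 0 < D l := hD_pos l
  have htpos : 0 < t := hDl.trans_le ht
  have hHl : 0 < H l := hH_pos l
  set f : ℕ → ENNReal := fun n =>
    ENNReal.ofReal ((1 / H (n + 1) - 1 / H n) * Real.exp (-t / D n)) with hf
  have hdiff : ∀ n, 0 ≤ 1 / H (n + 1) - 1 / H n := by
    intro n
    have h := hH_anti (Nat.le_succ n)
    have := one_div_le_one_div_of_le (hH_pos (n + 1)) h
    linarith
  -- split the sum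
  have hsplit : ∑' n, f n = (∑ n ∈ Finset.range l, f n) + ∑' k, f (k + l) :=
    (Summable.sum_add_tsum_nat_add' (f := f) (k := l) ENNReal.summable).symm
  -- head bound
  have hexp_le_one : ∀ n, Real.exp (-t / D n) ≤ 1 := by
    intro n
    rw [Real.exp_le_one_iff]
    have : 0 ≤ t / D n := div_nonneg htpos.le (hD_pos n).le
    rw [neg_div]
    linarith
  have hhead : ∑ n ∈ Finset.range l, f n ≤ ENNReal.ofReal (1 / H l - 1) := by
    calc ∑ n ∈ Finset.range l, f n
        ≤ ∑ n ∈ Finset.range l, ENNReal.ofReal (1 / H (n + 1) - 1 / H n) := by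
          refine Finset.sum_le_sum fun n _ => ENNReal.ofReal_le_ofReal ?_
          calc (1 / H (n + 1) - 1 / H n) * Real.exp (-t / D n)
              ≤ (1 / H (n + 1) - 1 / H n) * 1 :=
                mul_le_mul_of_nonneg_left (hexp_le_one n) (hdiff n)
            _ = 1 / H (n + 1) - 1 / H n := mul_one _
      _ = ENNReal.ofReal (∑ n ∈ Finset.range l, (1 / H (n + 1) - 1 / H n)) :=
          (ENNReal.ofReal_sum_of_nonneg fun n _ => hdiff n).symm
      _ = ENNReal.ofReal (1 / H l - 1) := by
          rw [Finset.sum_range_sub (fun n => 1 / H n)]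
          simp [hH0]
  have hHl_le_one : 1 ≤ 1 / H l := by
    have h := hH_anti (Nat.zero_le l)
    rw [hH0] at h
    rw [le_div_iff₀ hHl]
    linarith
  have hhead' : 1 + ∑ n ∈ Finset.range l, f n ≤ ENNReal.ofReal (1 / H l) := by
    calc 1 + ∑ n ∈ Finset.range l, f n
        ≤ 1 + ENNReal.ofReal (1 / H l - 1) := add_le_add_right hhead 1
      _ = ENNReal.ofReal 1 + ENNReal.ofReal (1 / H l - 1) := by
          rw [ENNReal.ofReal_one]
      _ = ENNReal.ofReal (1 / H l) := by
          rw [← ENNReal.ofReal_add zero_le_one (by linarith)]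
          ring_nf
  -- tail bound, termwise
  have htail : ∀ k, f (k + l) ≤
      ENNReal.ofReal (1 / H (l + k + 1) * Real.exp (-(D l / D (l + k)))) := by
    intro k
    have hkl : k + l = l + k := Nat.add_comm k l
    rw [hf]
    simp only [hkl]
    refine ENNReal.ofReal_le_ofReal ?_
    have h1 : 1 / H (l + k + 1) - 1 / H (l + k) ≤ 1 / H (l + k + 1) := by
      have : 0 < 1 / H (l + k) := one_div_pos.mpr (hH_pos _)
      linarith
    have h2 : Real.exp (-t / D (l + k)) ≤ Real.exp (-(D l / D (l + k))) := by
      apply Real.exp_le_exp.mpr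
      rw [neg_div]
      apply neg_le_neg
      exact (div_le_div_iff_of_pos_right (hD_pos (l + k))).mpr ht
    exact mul_le_mul h1 h2 (Real.exp_pos _).le
      (one_div_nonneg.mpr (hH_pos _).le)
  -- rewrite RHS
  have hrhs : ENNReal.ofReal (1 / H l) *
      (1 + ∑' k : ℕ, ENNReal.ofReal ((H l / H (l + k + 1)) * Real.exp (-(D l / D (l + k)))))
      = ENNReal.ofReal (1 / H l) +
        ∑' k : ℕ, ENNReal.ofReal (1 / H (l + k + 1) * Real.exp (-(D l / D (l + k)))) := by
    rw [mul_add, mul_one, ← ENNReal.tsum_mul_left]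
    congr 1
    refine tsum_congr fun k => ?_
    rw [← ENNReal.ofReal_mul (one_div_nonneg.mpr hHl.le)]
    congr 1
    have hne : H l ≠ 0 := hHl.ne'
    field_simp
  rw [hsplit, hrhs, ← add_assoc]
  exact add_le_add hhead' (ENNReal.tsum_le_tsum htail)
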